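/- Let f : ℝ → ℝ be continuous and concave on [a,b] with a < c₁ < c₂ ≤ b. Then for every x ∈ [a,c₁] one has L_{a,c₂}(x) ≤ L_{a,c₁}(x), and consequently the maximum absolute error is monotone: E(a,c₁) ≤ E(a,c₂). (Fixing the left endpoint of an interval, the maximal absolute error of the secant approximation does not decrease when the interval length increases.) -/
import Mathlib


/-- The secant line of `f` through `(u, f u)` and `(v, f v)`. -/
noncomputable def secant (f : ℝ → ℝ) (u v : ℝ) (x : ℝ) : ℝ :=
  f u + ((f v - f u) / (v - u)) * (x - u)

/-- The maximum absolute error of the secant approximation of `f` on `[u, v]`: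
`E(u,v) = sup_{x ∈ [u,v]} (f x - L_{u,v} x)`. -/
noncomputable def maxErr (f : ℝ → ℝ) (u v : ℝ) : ℝ :=
  sSup ((fun x => f x - secant f u v x) '' Set.Icc u v)

/-- Fixing the left endpoint, the secant line drops and the maximal
absolute error does not decrease when the interval grows. -/
theorem secant_error_mono_right (f : ℝ → ℝ) (a b c₁ c₂ : ℝ)
    (hab : a < b)
    (hf : ContinuousOn f (Set.Icc a b))
    (hconc : ConcaveOn ℝ (Set.Icc a b) f)
    (hac₁ : a < c₁) (hc₁c₂ : c₁ < c₂) (hc₂b : c₂ ≤ b) :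
    (∀ x ∈ Set.Icc a c₁, secant f a c₂ x ≤ secant f a c₁ x) ∧
    maxErr f a c₁ ≤ maxErr f a c₂ := by
  have hac₂ : a < c₂ := hac₁.trans hc₁c₂
  have ha : a ∈ Set.Icc a b := ⟨le_refl a, hab.le⟩
  have hc1 : c₁ ∈ Set.Icc a b := ⟨hac₁.le, hc₁c₂.le.trans hc₂b⟩
  have hc2 : c₂ ∈ Set.Icc a b := ⟨hac₂.le, hc₂b⟩
  -- slope inequality
  have key := hconc.neg.secant_mono ha hc1 hc2 (ne_of_gt hac₁) (ne_of_gt hac₂) hc₁c₂.le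
  simp only [Pi.neg_apply] at key
  have hslope : (f c₂ - f a) / (c₂ - a) ≤ (f c₁ - f a) / (c₁ - a) := by
    have h1 : (-f c₁ - -f a) / (c₁ - a) = -((f c₁ - f a) / (c₁ - a)) := by ring
    have h2 : (-f c₂ - -f a) / (c₂ - a) = -((f c₂ - f a) / (c₂ - a)) := by ring
    rw [h1, h2] at key
    linarith
  have hsec : ∀ x ∈ Set.Icc a c₁, secant f a c₂ x ≤ secant f a c₁ x := by
    intro x hx
    have hxa : 0 ≤ x - a := by linarith [hx.1]
    have := mul_le_mul_of_nonneg_right hslope hxa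
    simp only [secant]
    linarith
  refine ⟨hsec, ?_⟩
  -- boundedness of the bigger error set
  have hcont₂ : ContinuousOn (fun x => f x - secant f a c₂ x) (Set.Icc a c₂) := by
    apply ContinuousOn.sub
    · exact hf.mono (Set.Icc_subset_Icc le_rfl hc₂b)
    · exact (Continuous.continuousOn (by unfold secant; fun_prop))
  have hbdd : BddAbove ((fun x => f x - secant f a c₂ x) '' Set.Icc a c₂) :=
    (isCompact_Icc.image_of_continuousOn hcont₂).bddAbove
  have hne : ((fun x => f x - secant f a c₁ x) '' Set.Icc a c₁).Nonempty :=
    ⟨f a - secant f a c₁ a, ⟨a, ⟨le_refl a, hac₁.le⟩, rfl⟩⟩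
  apply csSup_le hne
  rintro y ⟨x, hx, rfl⟩
  have hx₂ : x ∈ Set.Icc a c₂ := ⟨hx.1, hx.2.trans hc₁c₂.le⟩
  calc f x - secant f a c₁ x ≤ f x - secant f a c₂ x := by linarith [hsec x hx]
    _ ≤ sSup ((fun x => f x - secant f a c₂ x) '' Set.Icc a c₂) :=
        le_csSup hbdd ⟨x, hx₂, rfl⟩
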